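/- Let (x, y, z) be a primitive solution of 7x² + 59y² = 3z² with x, y nonzero, z > 0, gcd(x,y) = 1, and (x,y,z) ∉ {(1,2,9), (1,−2,9), (−1,2,9)}. Then 9x − z ≠ 0 and 9y − 2z ≠ 0. -/

import Mathlib

theorem stmt15 (x y z : ℤ) (hx : x ≠ 0) (hy : y ≠ 0) (hz : 0 < z)
    (hcop : Int.gcd x y = 1) (h : 7*x^2 + 59*y^2 = 3*z^2)
    (h1 : (x, y, z) ≠ (1, 2, 9)) (h2 : (x, y, z) ≠ (1, -2, 9))
    (h3 : (x, y, z) ≠ (-1, 2, 9)) :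
    9*x - z ≠ 0 ∧ 9*y - 2*z ≠ 0 := by
  simp only [ne_eq, Prod.mk.injEq, not_and] at h1 h2 h3
  constructor
  · intro he
    have hzx : z = 9 * x := by linarith
    have hfac : (y - 2*x) * (y + 2*x) = 0 := by nlinarith
    have hx1 : x.natAbs = 1 := by
      have hxy : (x.natAbs : ℤ) ∣ (Int.gcd x y : ℤ) := by
        refine Int.dvd_coe_gcd (by simp [Int.natAbs_dvd]) ?_
        rcases mul_eq_zero.1 hfac with h' | h'
        · have : y = 2 * x := by linarith
          rw [this]; exact Dvd.dvd.mul_left (by simp [Int.natAbs_dvd]) 2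
        · have : y = -2 * x := by linarith
          rw [this]; exact Dvd.dvd.mul_left (by simp [Int.natAbs_dvd]) (-2)
      rw [hcop] at hxy
      exact_mod_cast Int.eq_one_of_dvd_one (by positivity) hxy
    have : x = 1 ∨ x = -1 := Int.natAbs_eq_iff.1 hx1
    rcases this with rfl | rfl
    · rcases mul_eq_zero.1 hfac with h' | h'
      · exact h1 rfl (by linarith) (by linarith)
      · exact h2 rfl (by linarith) (by linarith)
    · omega
  · intro he
    have hzy : 2 * z = 9 * y := by linarith
    have hfac : (y - 2*x) * (y + 2*x) = 0 := by nlinarith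
    have hx1 : x.natAbs = 1 := by
      have hxy : (x.natAbs : ℤ) ∣ (Int.gcd x y : ℤ) := by
        refine Int.dvd_coe_gcd (by simp [Int.natAbs_dvd]) ?_
        rcases mul_eq_zero.1 hfac with h' | h'
        · have : y = 2 * x := by linarith
          rw [this]; exact Dvd.dvd.mul_left (by simp [Int.natAbs_dvd]) 2
        · have : y = -2 * x := by linarith
          rw [this]; exact Dvd.dvd.mul_left (by simp [Int.natAbs_dvd]) (-2)
      rw [hcop] at hxy
      exact_mod_cast Int.eq_one_of_dvd_one (by positivity) hxy
    have : x = 1 ∨ x = -1 := Int.natAbs_eq_iff.1 hx1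
    rcases this with rfl | rfl
    · rcases mul_eq_zero.1 hfac with h' | h'
      · exact h1 rfl (by linarith) (by linarith)
      · have : y = -2 := by linarith
        omega
    · rcases mul_eq_zero.1 hfac with h' | h'
      · exact h3 rfl (by linarith) (by linarith)
      · have : y = 2 := by linarith
        omega
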